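/- Let V be a real inner product space with orthogonal complex structure J, N an inner product space, and α: V × V → N symmetric bilinear such that the curvature tensor R defined via the Gauss equation with curvature c satisfies the Kaehler identity R(X,Y)∘J = J∘R(X,Y). Let X₁,…,X_{2n} be an orthonormal basis of V diagonalizing α (i.e., α(X_i, X_j) = 0 for i ≠ j), and let K_{ij} = c + ⟨α_i, α_j⟩ with α_i = α(X_i,X_i) denote the sectional curvature of span{X_i,X_j}. Then ⟨JX_i, X_k⟩·K_{ij} = 0 whenever i, j, k are pairwise distinct. -/

import Mathlib

open scoped RealInnerProductSpace

/-- The (4,0)-curvature tensor `⟨R(X,Y)Z,W⟩` determined by the Gauss equation in a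
space form of curvature `c`. -/
noncomputable def gaussR {V N : Type*} [NormedAddCommGroup V] [InnerProductSpace ℝ V]
    [NormedAddCommGroup N] [InnerProductSpace ℝ N]
    (c : ℝ) (α : V →ₗ[ℝ] V →ₗ[ℝ] N) (X Y Z W : V) : ℝ :=
  c * (⟪Y, Z⟫ * ⟪X, W⟫ - ⟪X, Z⟫ * ⟪Y, W⟫) + ⟪α X W, α Y Z⟫ - ⟪α X Z, α Y W⟫

/-- equation (14) of Lemma 8: `⟨JX_i, X_k⟩ K_{ij} = 0`. -/
theorem stmt_8
    (V N : Type*) [NormedAddCommGroup V] [InnerProductSpace ℝ V] [FiniteDimensional ℝ V]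
    [NormedAddCommGroup N] [InnerProductSpace ℝ N]
    (n : ℕ) (c : ℝ)
    (J : V →ₗ[ℝ] V) (hJ2 : ∀ X : V, J (J X) = -X)
    (hJorth : ∀ X Y : V, ⟪J X, J Y⟫ = ⟪X, Y⟫)
    (α : V →ₗ[ℝ] V →ₗ[ℝ] N) (hαsymm : ∀ X Y : V, α X Y = α Y X)
    (hKaehler : ∀ X Y Z W : V, gaussR c α X Y (J Z) (J W) = gaussR c α X Y Z W)
    (b : Module.Basis (Fin (2 * n)) ℝ V) (hb : Orthonormal ℝ b)
    (hdiag : ∀ i j : Fin (2 * n), i ≠ j → α (b i) (b j) = 0)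
    (i j k : Fin (2 * n)) (hij : i ≠ j) (hjk : j ≠ k) (hik : i ≠ k) :
    ⟪J (b i), b k⟫ * (c + ⟪α (b i) (b i), α (b j) (b j)⟫) = 0 := by
  have hJskew : ∀ X Y : V, ⟪J X, Y⟫ = -⟪X, J Y⟫ := by
    intro X Y
    have h := hJorth X (J Y)
    rw [hJ2, inner_neg_right] at h
    linarith
  have hinner : ∀ p q : Fin (2 * n), ⟪b p, b q⟫ = if p = q then 1 else 0 :=
    orthonormal_iff_ite.mp hb
  have hrep : J (b k) = ∑ l, ⟪b l, J (b k)⟫ • b l := by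
    have h := (b.toOrthonormalBasis hb).sum_repr' (J (b k))
    simpa [Module.Basis.coe_toOrthonormalBasis] using h.symm
  have hα : α (b i) (J (b k)) = ⟪b i, J (b k)⟫ • α (b i) (b i) := by
    conv_lhs => rw [hrep]
    rw [map_sum]
    simp only [map_smul]
    rw [Finset.sum_eq_single i]
    · intro l _ hl
      rw [hdiag i l (Ne.symm hl), smul_zero]
    · intro h; exact absurd (Finset.mem_univ i) h
  have hA : gaussR c α (b i) (b j) (b j) (J (b k)) =
      ⟪b i, J (b k)⟫ * (c + ⟪α (b i) (b i), α (b j) (b j)⟫) := by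
    simp only [gaussR, hα, hdiag i j hij, hinner, if_pos rfl, if_neg hij,
      real_inner_smul_left, inner_zero_left, inner_zero_right, if_true]
    ring
  have hB : gaussR c α (b i) (b j) (J (b j)) (b k) = 0 := by
    simp only [gaussR, hdiag i k hik, hdiag j k hjk, hinner, if_neg hik, if_neg hjk,
      inner_zero_left, inner_zero_right]
    ring
  have hK := hKaehler (b i) (b j) (J (b j)) (b k)
  rw [hJ2] at hK
  have hneg : gaussR c α (b i) (b j) (-(b j)) (J (b k)) =
      -gaussR c α (b i) (b j) (b j) (J (b k)) := by
    simp only [gaussR, inner_neg_right, map_neg, inner_neg_left, inner_neg_right]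
    ring
  rw [hneg, hB, hA] at hK
  rw [hJskew (b i) (b k)]
  linarith
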